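/- Let (m_i)_{i≥1} be an infinite sequence of pairwise coprime natural numbers ≥ 2, and for each i let π_i be a cyclic permutation of length m_i on Z_{m_i}. For arbitrary r_i, s_i ∈ Z_{m_i}, let A = {n ∈ ℕ : π_i^n(r_i) = s_i for all i ≥ 1}. Then A is Buck measurable and μ(A) = 0. -/

import Mathlib

open scoped BigOperators

/-- Buck's measure density of a set of natural numbers. -/
noncomputable def buckDensity (S : Set ℕ) : ℝ :=
  sInf {x : ℝ | ∃ (k : ℕ) (r D : Fin k → ℕ), (∀ j, 0 < D j) ∧
    (S ⊆ ⋃ j, {n : ℕ | n % D j = r j % D j}) ∧ x = ∑ j, (1 : ℝ) / (D j : ℝ)}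

/-- A set is Buck measurable if its density and its complement's density sum to 1. -/
def BuckMeasurable (S : Set ℕ) : Prop :=
  buckDensity S + buckDensity Sᶜ = 1

/-- Any cover of all of ℕ by residue classes has total weight at least 1. -/
lemma coverSum_lower {k : ℕ} (rr D : Fin k → ℕ) (hD : ∀ j, 0 < D j)
    (hcov : ∀ n : ℕ, ∃ j, n % D j = rr j % D j) :
    (1 : ℝ) ≤ ∑ j, (1 : ℝ) / (D j : ℝ) := by
  classical
  set N := ∏ j, D j with hN
  have hNpos : 0 < N := Finset.prod_pos (fun j _ => hD j)
  have hdvd : ∀ j, D j ∣ N := fun j => Finset.dvd_prod_of_mem _ (Finset.mem_univ j)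
  have hcard : ∀ j : Fin k,
      ((Finset.range N).filter (fun n => n % D j = rr j % D j)).card ≤ N / D j := by
    intro j
    have h := Finset.card_le_card_of_injOn (fun n => n / D j)
      (s := (Finset.range N).filter (fun n => n % D j = rr j % D j))
      (t := Finset.range (N / D j))
      (fun n hn => by
        simp only [Finset.mem_coe, Finset.mem_filter, Finset.mem_range] at hn ⊢
        exact Nat.div_lt_div_of_lt_of_dvd (hdvd j) hn.1)
      (by
        intro a ha b hb hab
        simp only [Finset.coe_filter, Set.mem_setOf_eq, Finset.mem_range] at ha hb
        have hm : a % D j = b % D j := ha.2.trans hb.2.symm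
        have h1 := Nat.div_add_mod a (D j)
        have h2 := Nat.div_add_mod b (D j)
        simp only at hab
        rw [hab] at h1
        omega)
    simpa using h
  have hsub : Finset.range N ⊆
      Finset.univ.biUnion (fun j => (Finset.range N).filter (fun n => n % D j = rr j % D j)) := by
    intro n hn
    obtain ⟨j, hj⟩ := hcov n
    exact Finset.mem_biUnion.2 ⟨j, Finset.mem_univ j, Finset.mem_filter.2 ⟨hn, hj⟩⟩
  have hNle : N ≤ ∑ j, N / D j := by
    calc N = (Finset.range N).card := (Finset.card_range N).symm
    _ ≤ (Finset.univ.biUnion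
          (fun j => (Finset.range N).filter (fun n => n % D j = rr j % D j))).card :=
        Finset.card_le_card hsub
    _ ≤ ∑ j, ((Finset.range N).filter (fun n => n % D j = rr j % D j)).card :=
        Finset.card_biUnion_le
    _ ≤ ∑ j, N / D j := Finset.sum_le_sum (fun j _ => hcard j)
  have hreal : (N : ℝ) ≤ ∑ j, (N : ℝ) / (D j : ℝ) := by
    calc (N : ℝ) ≤ ((∑ j, N / D j : ℕ) : ℝ) := by exact_mod_cast hNle
    _ = ∑ j, ((N / D j : ℕ) : ℝ) := by push_cast; ring
    _ = ∑ j, (N : ℝ) / (D j : ℝ) := by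
        refine Finset.sum_congr rfl (fun j _ => ?_)
        rw [Nat.cast_div (hdvd j) (by exact_mod_cast (hD j).ne')]
  have hNpos' : (0 : ℝ) < N := by exact_mod_cast hNpos
  have : (N : ℝ) ≤ (N : ℝ) * ∑ j, (1 : ℝ) / (D j : ℝ) := by
    calc (N : ℝ) ≤ ∑ j, (N : ℝ) / (D j : ℝ) := hreal
    _ = (N : ℝ) * ∑ j, (1 : ℝ) / (D j : ℝ) := by
        rw [Finset.mul_sum]
        exact Finset.sum_congr rfl fun j _ => div_eq_mul_one_div _ _
  nlinarith [this, hNpos']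

/-- For a full cycle on `Iio M`, the times hitting `s0` form a residue class mod `M`. -/
lemma cycle_exists_residue (M : ℕ) (hM : 0 < M) (p : ℕ → ℕ)
    (hbij : Set.BijOn p (Set.Iio M) (Set.Iio M))
    (r0 s0 : ℕ) (hr : r0 < M) (hs : s0 < M)
    (hcyc : ∀ t < M, ∃ n, p^[n] r0 = t) :
    ∃ c < M, ∀ n, (p^[n] r0 = s0 ↔ n % M = c % M) := by
  classical
  set F : ℕ → ℕ := fun n => p^[n] r0 with hF
  have hFlt : ∀ n, F n < M := by
    intro n
    induction n with
    | zero => simpa [hF] using hr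
    | succ n ih =>
      have : F (n + 1) = p (F n) := by simp [hF, Function.iterate_succ_apply']
      rw [this]
      exact hbij.mapsTo ih
  have cancel : ∀ a b, F (a + 1) = F (b + 1) → F a = F b := by
    intro a b h
    apply hbij.injOn (hFlt a) (hFlt b)
    have h1 : F (a + 1) = p (F a) := by simp [hF, Function.iterate_succ_apply']
    have h2 : F (b + 1) = p (F b) := by simp [hF, Function.iterate_succ_apply']
    rw [h1, h2] at h; exact h
  have cancel_k : ∀ c a b, F (a + c) = F (b + c) → F a = F b := by
    intro c
    induction c with
    | zero => intro a b h; simpa using h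
    | succ c ih =>
      intro a b h
      have : F ((a + c) + 1) = F ((b + c) + 1) := by
        simpa [Nat.add_assoc] using h
      exact ih a b (cancel _ _ this)
  -- from a collision we get a return to r0
  have return_of_collision : ∀ a b, a < b → F a = F b → F (b - a) = r0 := by
    intro a b hab h
    have h' : F (0 + a) = F ((b - a) + a) := by
      simpa [Nat.sub_add_cancel hab.le] using h
    have := cancel_k a 0 (b - a) h'
    simpa [hF] using this.symm
  -- any positive return period d satisfies M ≤ d
  have MleD : ∀ d, 0 < d → F d = r0 → M ≤ d := by
    intro d hd hFd
    have hper : Function.Periodic F d := by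
      intro n
      have : F (n + d) = p^[n] (F d) := by
        simp [hF, Function.iterate_add_apply]
      rw [this, hFd]
    have hsubM : Finset.range M ⊆ (Finset.range d).image F := by
      intro t ht
      rw [Finset.mem_range] at ht
      obtain ⟨n, hn⟩ := hcyc t ht
      refine Finset.mem_image.2 ⟨n % d, Finset.mem_range.2 (Nat.mod_lt _ hd), ?_⟩
      rw [hper.map_mod_nat]
      exact hn
    calc M = (Finset.range M).card := (Finset.card_range M).symm
    _ ≤ ((Finset.range d).image F).card := Finset.card_le_card hsubM
    _ ≤ (Finset.range d).card := Finset.card_image_le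
    _ = d := Finset.card_range d
  -- pigeonhole: there is a collision among 0..M
  have hcol : ∃ a b, a < b ∧ b ≤ M ∧ F a = F b := by
    have hmaps : ∀ n ∈ Finset.range (M + 1), F n ∈ Finset.range M :=
      fun n _ => Finset.mem_range.2 (hFlt n)
    have hlt : (Finset.range M).card < (Finset.range (M + 1)).card := by
      simp
    obtain ⟨a, ha, b, hb, hne, heq⟩ :=
      Finset.exists_ne_map_eq_of_card_lt_of_maps_to hlt hmaps
    rw [Finset.mem_range] at ha hb
    rcases lt_or_gt_of_ne hne with h | h
    · exact ⟨a, b, h, by omega, heq⟩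
    · exact ⟨b, a, h, by omega, heq.symm⟩
  obtain ⟨a, b, hab, hbM, heq⟩ := hcol
  have hret : F (b - a) = r0 := return_of_collision a b hab heq
  have hdpos : 0 < b - a := by omega
  have hMle : M ≤ b - a := MleD _ hdpos hret
  have htM : b - a = M := by omega
  have hFM : F M = r0 := htM ▸ hret
  have hperM : Function.Periodic F M := by
    intro n
    have : F (n + M) = p^[n] (F M) := by simp [hF, Function.iterate_add_apply]
    rw [this, hFM]
  -- injectivity on [0, M)
  have hinjlt : ∀ a < M, ∀ b < M, F a = F b → a = b := by
    intro a ha b hb h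
    by_contra hne
    rcases lt_or_gt_of_ne hne with hlt | hlt
    · have := MleD _ (by omega) (return_of_collision a b hlt h); omega
    · have := MleD _ (by omega) (return_of_collision b a hlt h.symm); omega
  obtain ⟨n0, hn0⟩ := hcyc s0 hs
  refine ⟨n0 % M, Nat.mod_lt _ hM, fun n => ?_⟩
  have hc : F (n0 % M) = s0 := by rw [hperM.map_mod_nat]; exact hn0
  constructor
  · intro h
    have h1 : F (n % M) = F (n0 % M) := by
      rw [hperM.map_mod_nat, hperM.map_mod_nat]; exact h.trans hn0.symm
    have heq2 := hinjlt _ (Nat.mod_lt _ hM) _ (Nat.mod_lt _ hM) h1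
    rw [heq2]
    exact (Nat.mod_mod_of_dvd n0 (dvd_refl M)).symm
  · intro h
    show F n = s0
    rw [← hperM.map_mod_nat n, h, Nat.mod_mod_of_dvd n0 (dvd_refl M)]
    exact hc

lemma buckDensity_bddBelow (S : Set ℕ) :
    BddBelow {x : ℝ | ∃ (k : ℕ) (r D : Fin k → ℕ), (∀ j, 0 < D j) ∧
      (S ⊆ ⋃ j, {n : ℕ | n % D j = r j % D j}) ∧ x = ∑ j, (1 : ℝ) / (D j : ℝ)} := by
  refine ⟨0, fun x hx => ?_⟩
  obtain ⟨k, r, D, hD, _, hsum⟩ := hx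
  rw [hsum]
  exact Finset.sum_nonneg (fun j _ => by positivity)

lemma buckDensity_nonneg (S : Set ℕ) : 0 ≤ buckDensity S := by
  apply Real.sInf_nonneg
  rintro x ⟨k, r, D, hD, _, hsum⟩
  rw [hsum]
  exact Finset.sum_nonneg (fun j _ => by positivity)

/-- For infinitely many pairwise coprime full cycles, the set of n matching all the
conditions simultaneously is Buck measurable of density 0. -/
theorem stmt6 (m : ℕ → ℕ) (h2 : ∀ i, 2 ≤ m i)
    (hcop : Pairwise fun i j => Nat.Coprime (m i) (m j))
    (π : ℕ → ℕ → ℕ)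
    (hbij : ∀ i, Set.BijOn (π i) (Set.Iio (m i)) (Set.Iio (m i)))
    (hcyc : ∀ i, ∀ r < m i, ∀ s < m i, ∃ n, (π i)^[n] r = s)
    (r s : ℕ → ℕ) (hr : ∀ i, r i < m i) (hs : ∀ i, s i < m i) :
    buckDensity {n : ℕ | ∀ i, (π i)^[n] (r i) = s i} = 0 ∧
    BuckMeasurable {n : ℕ | ∀ i, (π i)^[n] (r i) = s i} := by
  classical
  set A : Set ℕ := {n : ℕ | ∀ i, (π i)^[n] (r i) = s i} with hA
  -- the residue classes
  have hres : ∀ i, ∃ c < m i, ∀ n, ((π i)^[n] (r i) = s i ↔ n % m i = c % m i) :=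
    fun i => cycle_exists_residue (m i) (by have := h2 i; omega)
      (π i) (hbij i) (r i) (s i) (hr i) (hs i) (fun t ht => hcyc i (r i) (hr i) t ht)
  choose c hc hcres using hres
  -- m is injective hence unbounded
  have minj : Function.Injective m := by
    intro i j hij
    by_contra hne
    have hco : Nat.gcd (m i) (m j) = 1 := hcop hne
    rw [hij, Nat.gcd_self] at hco
    have := h2 j; omega
  have munb : ∀ K : ℕ, ∃ i, K < m i := by
    intro K
    have hinf : (Set.range m).Infinite := Set.infinite_range_of_injective minj
    obtain ⟨b, ⟨i, hib⟩, hb⟩ := hinf.exists_gt K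
    exact ⟨i, hib ▸ hb⟩
  -- A is covered by a single residue class mod m i, for each i
  have hmemcover : ∀ i, (1 : ℝ) / (m i : ℝ) ∈
      {x : ℝ | ∃ (k : ℕ) (rr D : Fin k → ℕ), (∀ j, 0 < D j) ∧
        (A ⊆ ⋃ j, {n : ℕ | n % D j = rr j % D j}) ∧ x = ∑ j, (1 : ℝ) / (D j : ℝ)} := by
    intro i
    refine ⟨1, fun _ => c i, fun _ => m i, ?_, ?_, ?_⟩
    · intro j; show 0 < m i; have := h2 i; omega
    · intro n hn
      refine Set.mem_iUnion.2 ⟨0, ?_⟩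
      exact (hcres i n).mp (hn i)
    · simp
  have hdle : ∀ i, buckDensity A ≤ 1 / (m i : ℝ) :=
    fun i => csInf_le (buckDensity_bddBelow A) (hmemcover i)
  -- density small
  have hdle_eps : ∀ ε : ℝ, 0 < ε → buckDensity A ≤ ε := by
    intro ε hε
    obtain ⟨i, hi⟩ := munb ⌈1/ε⌉₊
    have hmpos : (0 : ℝ) < m i := by
      have := h2 i; positivity
    have h1 : 1 / ε < (m i : ℝ) := by
      calc 1 / ε ≤ (⌈1/ε⌉₊ : ℝ) := Nat.le_ceil _
      _ < (m i : ℝ) := by exact_mod_cast hi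
    have h2' : 1 / (m i : ℝ) < ε := by
      rw [div_lt_iff₀ hmpos]
      rw [div_lt_iff₀ hε] at h1
      nlinarith
    exact (hdle i).trans h2'.le
  have hd0 : buckDensity A = 0 := by
    refine le_antisymm ?_ (buckDensity_nonneg A)
    refine le_of_forall_pos_le_add (fun ε hε => ?_)
    simpa using hdle_eps ε hε
  refine ⟨hd0, ?_⟩
  -- complement density
  have hcne : {x : ℝ | ∃ (k : ℕ) (rr D : Fin k → ℕ), (∀ j, 0 < D j) ∧
      (Aᶜ ⊆ ⋃ j, {n : ℕ | n % D j = rr j % D j}) ∧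
      x = ∑ j, (1 : ℝ) / (D j : ℝ)}.Nonempty := by
    refine ⟨1, 1, fun _ => 0, fun _ => 1, fun _ => one_pos, ?_, by simp⟩
    intro n _
    exact Set.mem_iUnion.2 ⟨0, by simp [Nat.mod_one]⟩
  have hco_le : buckDensity Aᶜ ≤ 1 := by
    apply csInf_le (buckDensity_bddBelow Aᶜ)
    refine ⟨1, fun _ => 0, fun _ => 1, fun _ => one_pos, ?_, by simp⟩
    intro n _
    exact Set.mem_iUnion.2 ⟨0, by simp [Nat.mod_one]⟩
  have hco_ge : (1 : ℝ) ≤ buckDensity Aᶜ := by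
    apply le_csInf hcne
    rintro y ⟨k, rr, D, hD, hsub, hsum⟩
    -- show 1 ≤ y + 1/(m i) for each i, then conclude
    have key : ∀ i, (1 : ℝ) ≤ y + 1 / (m i : ℝ) := by
      intro i
      set D' : Fin (k + 1) → ℕ := Fin.snoc D (m i) with hD'
      set rr' : Fin (k + 1) → ℕ := Fin.snoc rr (c i) with hrr'
      have hD'pos : ∀ j, 0 < D' j := by
        intro j
        induction j using Fin.lastCases with
        | last => simp [hD', Fin.snoc_last]; have := h2 i; omega
        | cast j => simp [hD', Fin.snoc_castSucc]; exact hD j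
      have hcov : ∀ n : ℕ, ∃ j, n % D' j = rr' j % D' j := by
        intro n
        by_cases hn : n ∈ A
        · refine ⟨Fin.last k, ?_⟩
          simp only [hD', hrr', Fin.snoc_last]
          exact (hcres i n).mp (hn i)
        · obtain ⟨s, ⟨j, rfl⟩, hns⟩ := hsub hn
          exact ⟨j.castSucc, by simpa [hD', hrr', Fin.snoc_castSucc] using hns⟩
      have hlow := coverSum_lower rr' D' hD'pos hcov
      have hsum' : ∑ j, (1 : ℝ) / (D' j : ℝ) = y + 1 / (m i : ℝ) := by
        rw [Fin.sum_univ_castSucc]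
        simp only [hD', Fin.snoc_castSucc, Fin.snoc_last]
        rw [hsum]
      linarith [hlow, hsum'.symm.le, hsum'.le]
    refine le_of_forall_pos_le_add (fun ε hε => ?_)
    obtain ⟨i, hi⟩ := munb ⌈1/ε⌉₊
    have hmpos : (0 : ℝ) < m i := by have := h2 i; positivity
    have h1 : 1 / ε < (m i : ℝ) := by
      calc 1 / ε ≤ (⌈1/ε⌉₊ : ℝ) := Nat.le_ceil _
      _ < (m i : ℝ) := by exact_mod_cast hi
    have h2' : 1 / (m i : ℝ) < ε := by
      rw [div_lt_iff₀ hmpos]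
      rw [div_lt_iff₀ hε] at h1
      nlinarith
    have := key i
    linarith
  unfold BuckMeasurable
  rw [hd0]
  linarith
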